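/- Pointwise limit of the outgoing nonlocal velocity in the transition area (on the incoming road) as the nonlocal range tends to infinity: let u : (0,∞) → [0,ρ_max] be measurable and either identically zero or having compact support contained in [0,∞). Then for every fixed x < 0, the quantity W_η(x) = ∫_0^{max(x+η,0)} v(u(y)) ω_η(y−x) dy satisfies lim_{η→∞} W_η(x) = v(0). -/
import Mathlib


open MeasureTheory Filter

/-- Pointwise limit of the outgoing nonlocal velocity in the transition
area (on the incoming road) as the nonlocal range tends to infinity: for
`u : (0,∞) → [0,ρmax]` measurable which is either identically zero or has compact
support contained in `[0,∞)`, and every fixed `x < 0`,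
`W_η(x) = ∫_0^{max(x+η,0)} v(u(y)) ω_η(y-x) dy → v(0)` as `η → ∞`. -/
theorem stmt_12
    (ρmax : ℝ) (hρmax : 0 < ρmax)
    (v : ℝ → ℝ)
    (hv : ContDiffOn ℝ 2 v (Set.Icc 0 ρmax))
    (hvmono : AntitoneOn v (Set.Icc 0 ρmax))
    (hvnn : ∀ x ∈ Set.Icc (0 : ℝ) ρmax, 0 ≤ v x)
    (hvmax : v ρmax = 0)
    (ω : ℝ → ℝ → ℝ)
    (hω : ∀ η : ℝ, 0 < η → ContDiffOn ℝ 1 (ω η) (Set.Icc 0 η))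
    (hωmono : ∀ η : ℝ, 0 < η → AntitoneOn (ω η) (Set.Icc 0 η))
    (hωnn : ∀ η : ℝ, 0 < η → ∀ x ∈ Set.Icc (0 : ℝ) η, 0 ≤ ω η x)
    (hωint : ∀ η : ℝ, 0 < η → (∫ x in (0 : ℝ)..η, ω η x) = 1)
    (hω0 : Tendsto (fun η => ω η 0) atTop (nhds 0))
    (u : ℝ → ℝ) (hu_meas : Measurable u)
    (hu_range : ∀ y : ℝ, 0 < y → u y ∈ Set.Icc 0 ρmax)
    (hu_supp : (∀ y : ℝ, 0 < y → u y = 0) ∨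
      (∃ b : ℝ, 0 ≤ b ∧ ∀ y : ℝ, b < y → u y = 0))
    (x : ℝ) (hx : x < 0) :
    Tendsto (fun η : ℝ => ∫ y in (0 : ℝ)..max (x + η) 0, v (u y) * ω η (y - x))
      atTop (nhds (v 0)) := by
  obtain ⟨b, hb0, hb⟩ : ∃ b : ℝ, 0 ≤ b ∧ ∀ y : ℝ, b < y → u y = 0 := by
    rcases hu_supp with h | h
    · exact ⟨0, le_refl 0, fun y hy => h y hy⟩
    · exact h
  have hv0nn : 0 ≤ v 0 := hvnn 0 ⟨le_refl 0, hρmax.le⟩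
  -- the clamped composition
  set clamp : ℝ → ℝ := fun t => max 0 (min t ρmax) with hclamp
  have hclamp_mem : ∀ t, clamp t ∈ Set.Icc 0 ρmax := fun t =>
    ⟨le_max_left _ _, max_le hρmax.le (min_le_right _ _)⟩
  have hclamp_mono : Monotone clamp := fun a b hab =>
    max_le_max le_rfl (min_le_min hab le_rfl)
  have hclamp_id : ∀ t ∈ Set.Icc (0:ℝ) ρmax, clamp t = t := fun t ht => by
    simp [hclamp, min_eq_left ht.2, max_eq_right ht.1]
  set g : ℝ → ℝ := fun t => v (clamp t) with hgdef
  have hg_anti : Antitone g := fun a b hab =>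
    hvmono (hclamp_mem a) (hclamp_mem b) (hclamp_mono hab)
  have hg_meas : Measurable g := hg_anti.measurable
  have hg_le : ∀ t, g t ≤ v 0 := fun t =>
    hvmono ⟨le_refl 0, hρmax.le⟩ (hclamp_mem t) (hclamp_mem t).1
  have hg_nn : ∀ t, 0 ≤ g t := fun t => hvnn _ (hclamp_mem t)
  have hg0 : g 0 = v 0 := by
    have : clamp 0 = 0 := by simp [hclamp, min_eq_left hρmax.le]
    simp [hgdef, this]
  set C : ℝ := v 0 * b + v 0 * (b - x) with hCdef
  -- key bound for large η
  have key : ∀ η : ℝ, b - x < η →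
      |(∫ y in (0:ℝ)..max (x+η) 0, v (u y) * ω η (y - x)) - v 0| ≤ C * ω η 0 := by
    intro η hη
    have hbx0 : 0 ≤ b - x := by linarith
    have hηpos : 0 < η := lt_of_le_of_lt hbx0 hη
    set c : ℝ := x + η with hcdef
    have hcb : b < c := by simp [hcdef]; linarith
    have hc0 : 0 < c := lt_of_le_of_lt hb0 hcb
    have hmax : max (x + η) 0 = c := max_eq_left hc0.le
    have hω0nn : 0 ≤ ω η 0 := hωnn η hηpos 0 ⟨le_refl 0, hηpos.le⟩
    have hωcont : ContinuousOn (ω η) (Set.Icc 0 η) := (hω η hηpos).continuousOn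
    -- the shifted kernel
    have hshift_mem : ∀ y ∈ Set.Icc (0:ℝ) c, y - x ∈ Set.Icc (0:ℝ) η := by
      intro y hy
      constructor
      · linarith [hy.1]
      · have := hy.2; simp [hcdef] at this ⊢; linarith
    have hshift_cont : ContinuousOn (fun y => ω η (y - x)) (Set.Icc 0 c) :=
      hωcont.comp ((continuous_id.sub continuous_const).continuousOn) hshift_mem
    have hshift_nn : ∀ y ∈ Set.Icc (0:ℝ) c, 0 ≤ ω η (y - x) := fun y hy =>
      hωnn η hηpos _ (hshift_mem y hy)
    have hshift_le : ∀ y ∈ Set.Icc (0:ℝ) c, ω η (y - x) ≤ ω η 0 := fun y hy =>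
      hωmono η hηpos ⟨le_refl 0, hηpos.le⟩ (hshift_mem y hy) (by linarith [hy.1, hx])
    set F : ℝ → ℝ := fun y => g (u y) * ω η (y - x) with hFdef
    -- integrability of F on [0, c]
    have hFaesm : AEStronglyMeasurable F (volume.restrict (Set.Ioc (0:ℝ) c)) := by
      apply AEStronglyMeasurable.mul
      · exact ((hg_meas.comp hu_meas).aestronglyMeasurable).restrict
      · exact (hshift_cont.mono Set.Ioc_subset_Icc_self).aestronglyMeasurable
          measurableSet_Ioc
    have hFbdd : ∀ y ∈ Set.Icc (0:ℝ) c, ‖F y‖ ≤ v 0 * ω η 0 := by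
      intro y hy
      have h1 : 0 ≤ F y := mul_nonneg (hg_nn _) (hshift_nn y hy)
      rw [Real.norm_eq_abs, abs_of_nonneg h1]
      exact mul_le_mul (hg_le _) (hshift_le y hy) (hshift_nn y hy) hv0nn
    have hFint : IntervalIntegrable F volume 0 c := by
      rw [intervalIntegrable_iff_integrableOn_Ioc_of_le hc0.le]
      refine ⟨hFaesm, ?_⟩
      apply HasFiniteIntegral.restrict_of_bounded (C := v 0 * ω η 0) measure_Ioc_lt_top
      exact (ae_restrict_iff' measurableSet_Ioc).mpr
        (Filter.Eventually.of_forall fun y hy => hFbdd y (Set.Ioc_subset_Icc_self hy))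
    have hF1 : IntervalIntegrable F volume 0 b := by
      apply hFint.mono_set
      rw [Set.uIcc_of_le hb0, Set.uIcc_of_le hc0.le]
      exact Set.Icc_subset_Icc (le_refl 0) hcb.le
    have hF2 : IntervalIntegrable F volume b c := by
      apply hFint.mono_set
      rw [Set.uIcc_of_le hcb.le, Set.uIcc_of_le hc0.le]
      exact Set.Icc_subset_Icc hb0 (le_refl c)
    -- rewrite the integrand as F
    have hIeq : (∫ y in (0:ℝ)..max (x+η) 0, v (u y) * ω η (y - x)) = ∫ y in (0:ℝ)..c, F y := by
      rw [hmax, intervalIntegral.integral_of_le hc0.le, intervalIntegral.integral_of_le hc0.le]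
      apply setIntegral_congr_fun measurableSet_Ioc
      intro y hy
      have : clamp (u y) = u y := hclamp_id _ (hu_range y hy.1)
      simp [hFdef, hgdef, this]
    -- split
    have hsplit : (∫ y in (0:ℝ)..c, F y) = (∫ y in (0:ℝ)..b, F y) + ∫ y in b..c, F y :=
      (intervalIntegral.integral_add_adjacent_intervals hF1 hF2).symm
    -- the far part
    have hfar : (∫ y in b..c, F y) = v 0 * ∫ t in (b - x)..η, ω η t := by
      have h1 : (∫ y in b..c, F y) = ∫ y in b..c, v 0 * ω η (y - x) := by
        rw [intervalIntegral.integral_of_le hcb.le, intervalIntegral.integral_of_le hcb.le]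
        apply setIntegral_congr_fun measurableSet_Ioc
        intro y hy
        have hu0 : u y = 0 := hb y hy.1
        simp [hFdef, hu0, hg0]
      rw [h1, intervalIntegral.integral_const_mul]
      congr 1
      have := intervalIntegral.integral_comp_sub_right (a := b) (b := c) (ω η) x
      rw [this]
      congr 1
      simp [hcdef]
    -- ω integrals
    have hωi1 : IntervalIntegrable (ω η) volume 0 (b - x) := by
      apply ContinuousOn.intervalIntegrable
      apply hωcont.mono
      rw [Set.uIcc_of_le hbx0]
      exact Set.Icc_subset_Icc (le_refl 0) hη.le
    have hωi2 : IntervalIntegrable (ω η) volume (b - x) η := by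
      apply ContinuousOn.intervalIntegrable
      apply hωcont.mono
      rw [Set.uIcc_of_le hη.le]
      exact Set.Icc_subset_Icc hbx0 (le_refl η)
    set J : ℝ := ∫ t in (0:ℝ)..(b - x), ω η t with hJdef
    have hJsum : J + (∫ t in (b - x)..η, ω η t) = 1 := by
      rw [intervalIntegral.integral_add_adjacent_intervals hωi1 hωi2]
      exact hωint η hηpos
    have hJnn : 0 ≤ J :=
      intervalIntegral.integral_nonneg hbx0 fun t ht =>
        hωnn η hηpos t ⟨ht.1, ht.2.trans hη.le⟩
    have hJle : J ≤ (b - x) * ω η 0 := by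
      have h := intervalIntegral.integral_mono_on hbx0 hωi1 intervalIntegrable_const
        (fun t ht => hωmono η hηpos ⟨le_refl 0, hηpos.le⟩ ⟨ht.1, ht.2.trans hη.le⟩ ht.1)
      simpa using h
    -- near part bounds
    have hI1nn : 0 ≤ ∫ y in (0:ℝ)..b, F y :=
      intervalIntegral.integral_nonneg hb0 fun y hy =>
        mul_nonneg (hg_nn _) (hshift_nn y ⟨hy.1, hy.2.trans hcb.le⟩)
    have hI1le : (∫ y in (0:ℝ)..b, F y) ≤ v 0 * (b * ω η 0) := by
      have h := intervalIntegral.integral_mono_on hb0 hF1 intervalIntegrable_const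
        (fun y hy => by
          have hy' : y ∈ Set.Icc (0:ℝ) c := ⟨hy.1, hy.2.trans hcb.le⟩
          exact mul_le_mul (hg_le _) (hshift_le y hy') (hshift_nn y hy') hv0nn)
      simpa using h
    -- assemble
    have hmul : v 0 * J ≤ v 0 * ((b - x) * ω η 0) := mul_le_mul_of_nonneg_left hJle hv0nn
    have hmulnn : 0 ≤ v 0 * J := mul_nonneg hv0nn hJnn
    have hval : (∫ y in (0:ℝ)..max (x+η) 0, v (u y) * ω η (y - x)) - v 0
        = (∫ y in (0:ℝ)..b, F y) - v 0 * J := by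
      rw [hIeq, hsplit, hfar]
      have : (∫ t in (b - x)..η, ω η t) = 1 - J := by linarith
      rw [this]; ring
    rw [hval, hCdef]
    rw [abs_le]
    constructor
    · nlinarith [mul_nonneg (mul_nonneg hv0nn hb0) hω0nn]
    · nlinarith [mul_nonneg (mul_nonneg hv0nn hbx0) hω0nn]
  -- squeeze
  have hmain : Tendsto (fun η : ℝ =>
      (∫ y in (0:ℝ)..max (x+η) 0, v (u y) * ω η (y - x)) - v 0) atTop (nhds 0) := by
    apply squeeze_zero_norm' (a := fun η => C * ω η 0)
    · filter_upwards [eventually_gt_atTop (b - x)] with η hη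
      rw [Real.norm_eq_abs]
      exact key η hη
    · have := hω0.const_mul C
      simpa using this
  have := hmain.add_const (v 0)
  simpa using this
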